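/- Let R be an algebraic curvature tensor on ℝⁿ (n ≥ 4). Then R has nonnegative isotropic curvature if and only if R(ζ,η,ζ̄,η̄) ≥ 0 for all vectors ζ, η in the complexification ℂⁿ satisfying g(ζ,ζ) = g(ζ,η) = g(η,η) = 0, where g denotes the complex-bilinear extension of the standard inner product and R is extended complex multilinearly. -/
import Mathlib

noncomputable section
open scoped BigOperators ComplexOrder

def dotp {n : ℕ} (X Y : Fin n → ℝ) : ℝ := ∑ i, X i * Y i

def ON4 {n : ℕ} (e₁ e₂ e₃ e₄ : Fin n → ℝ) : Prop :=
  dotp e₁ e₁ = 1 ∧ dotp e₂ e₂ = 1 ∧ dotp e₃ e₃ = 1 ∧ dotp e₄ e₄ = 1 ∧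
  dotp e₁ e₂ = 0 ∧ dotp e₁ e₃ = 0 ∧ dotp e₁ e₄ = 0 ∧
  dotp e₂ e₃ = 0 ∧ dotp e₂ e₄ = 0 ∧ dotp e₃ e₄ = 0

/-- Complex bilinear extension of the standard inner product. -/
def gc {n : ℕ} (ζ η : Fin n → ℂ) : ℂ := ∑ i, ζ i * η i

/-- Componentwise complex conjugation. -/
def conjv {n : ℕ} (ζ : Fin n → ℂ) : Fin n → ℂ := fun i => (starRingEnd ℂ) (ζ i)

/-- Inclusion of real vectors into the complexification. -/
def ιC {n : ℕ} (X : Fin n → ℝ) : Fin n → ℂ := fun i => (X i : ℂ)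

section helpers
variable {α : Type*}
lemma upd0 (a b c d x : α) : Function.update ![a,b,c,d] (0:Fin 4) x = ![x,b,c,d] := by
  funext i; fin_cases i <;> simp [Function.update]
lemma upd1 (a b c d x : α) : Function.update ![a,b,c,d] (1:Fin 4) x = ![a,x,c,d] := by
  funext i; fin_cases i <;> simp [Function.update]
lemma upd2 (a b c d x : α) : Function.update ![a,b,c,d] (2:Fin 4) x = ![a,b,x,d] := by
  funext i; fin_cases i <;> simp [Function.update]
lemma upd3 (a b c d x : α) : Function.update ![a,b,c,d] (3:Fin 4) x = ![a,b,c,x] := by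
  funext i; fin_cases i <;> simp [Function.update]
end helpers

section mlin
variable {𝕜 : Type*} [CommRing 𝕜] {M : Type*} [AddCommGroup M] [Module 𝕜 M]
  (f : MultilinearMap 𝕜 (fun _ : Fin 4 => M) 𝕜)
lemma madd0 (x y b c d : M) : f ![x+y,b,c,d] = f ![x,b,c,d] + f ![y,b,c,d] := by
  have h := f.map_update_add ![x,b,c,d] 0 x y; rwa [upd0, upd0, upd0] at h
lemma madd1 (a x y c d : M) : f ![a,x+y,c,d] = f ![a,x,c,d] + f ![a,y,c,d] := by
  have h := f.map_update_add ![a,x,c,d] 1 x y; rwa [upd1, upd1, upd1] at h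
lemma madd2 (a b x y d : M) : f ![a,b,x+y,d] = f ![a,b,x,d] + f ![a,b,y,d] := by
  have h := f.map_update_add ![a,b,x,d] 2 x y; rwa [upd2, upd2, upd2] at h
lemma madd3 (a b c x y : M) : f ![a,b,c,x+y] = f ![a,b,c,x] + f ![a,b,c,y] := by
  have h := f.map_update_add ![a,b,c,x] 3 x y; rwa [upd3, upd3, upd3] at h
lemma msmul0 (μ : 𝕜) (x b c d : M) : f ![μ•x,b,c,d] = μ * f ![x,b,c,d] := by
  have h := f.map_update_smul ![x,b,c,d] 0 μ x; rwa [upd0, upd0, smul_eq_mul] at h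
lemma msmul1 (μ : 𝕜) (a x c d : M) : f ![a,μ•x,c,d] = μ * f ![a,x,c,d] := by
  have h := f.map_update_smul ![a,x,c,d] 1 μ x; rwa [upd1, upd1, smul_eq_mul] at h
lemma msmul2 (μ : 𝕜) (a b x d : M) : f ![a,b,μ•x,d] = μ * f ![a,b,x,d] := by
  have h := f.map_update_smul ![a,b,x,d] 2 μ x; rwa [upd2, upd2, smul_eq_mul] at h
lemma msmul3 (μ : 𝕜) (a b c x : M) : f ![a,b,c,μ•x] = μ * f ![a,b,c,x] := by
  have h := f.map_update_smul ![a,b,c,x] 3 μ x; rwa [upd3, upd3, smul_eq_mul] at h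
lemma mneg0 (x b c d : M) : f ![-x,b,c,d] = - f ![x,b,c,d] := by
  rw [show -x = (-1:𝕜)•x by simp, msmul0]; ring
lemma mneg1 (a x c d : M) : f ![a,-x,c,d] = - f ![a,x,c,d] := by
  rw [show -x = (-1:𝕜)•x by simp, msmul1]; ring
lemma mneg2 (a b x d : M) : f ![a,b,-x,d] = - f ![a,b,x,d] := by
  rw [show -x = (-1:𝕜)•x by simp, msmul2]; ring
lemma mneg3 (a b c x : M) : f ![a,b,c,-x] = - f ![a,b,c,x] := by
  rw [show -x = (-1:𝕜)•x by simp, msmul3]; ring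
end mlin

lemma mstep {𝕜 : Type*} [CommRing 𝕜] {M : Type*} [AddCommGroup M] [Module 𝕜 M]
    (f : MultilinearMap 𝕜 (fun _ : Fin 4 => M) 𝕜) (u v uc vc : M) (μ ν : 𝕜)
    (h2 : f ![u,v,uc,uc] = 0) (h3 : f ![u,u,uc,vc] = 0) (h4 : f ![u,u,uc,uc] = 0) :
    f ![u, v + μ•u, uc, vc + ν•uc] = f ![u,v,uc,vc] := by
  rw [madd1, madd3, madd3, msmul3, msmul1, msmul1, msmul3, h2, h3, h4]
  ring

variable {n : ℕ}

lemma dotp_comm (X Y : Fin n → ℝ) : dotp X Y = dotp Y X := by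
  simp [dotp, mul_comm]
lemma dotp_smul_left (r : ℝ) (X Y : Fin n → ℝ) : dotp (r • X) Y = r * dotp X Y := by
  simp [dotp, Finset.mul_sum, mul_assoc]
lemma dotp_smul_right (r : ℝ) (X Y : Fin n → ℝ) : dotp X (r • Y) = r * dotp X Y := by
  rw [dotp_comm, dotp_smul_left, dotp_comm]
lemma dotp_neg_right (X Y : Fin n → ℝ) : dotp X (-Y) = - dotp X Y := by
  simp [dotp, Finset.sum_neg_distrib]
lemma dotp_self_nonneg (X : Fin n → ℝ) : 0 ≤ dotp X X :=
  Finset.sum_nonneg fun i _ => mul_self_nonneg (X i)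
lemma dotp_self_eq_zero {X : Fin n → ℝ} (h : dotp X X = 0) : X = 0 := by
  funext i
  have h2 := (Finset.sum_eq_zero_iff_of_nonneg (fun i _ => mul_self_nonneg (X i))).1 h i
    (Finset.mem_univ i)
  have := mul_self_eq_zero.1 h2
  simpa using this

lemma gc_decomp (a b c d : Fin n → ℝ) :
    gc (ιC a + Complex.I • ιC b) (ιC c + Complex.I • ιC d)
      = ((dotp a c - dotp b d : ℝ) : ℂ) + Complex.I * ((dotp a d + dotp b c : ℝ) : ℂ) := by
  have h : ∀ i : Fin n, (ιC a + Complex.I • ιC b) i * (ιC c + Complex.I • ιC d) i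
      = ((a i * c i - b i * d i : ℝ) : ℂ) + Complex.I * ((a i * d i + b i * c i : ℝ) : ℂ) := by
    intro i
    simp only [Pi.add_apply, Pi.smul_apply, ιC, smul_eq_mul]
    push_cast
    ring_nf
    rw [Complex.I_sq]
    ring
  simp only [gc, h, Finset.sum_add_distrib, dotp]
  push_cast
  rw [← Finset.mul_sum, ← Finset.sum_sub_distrib, ← Finset.sum_add_distrib]

lemma gc_add_left (x y z : Fin n → ℂ) : gc (x + y) z = gc x z + gc y z := by
  simp [gc, add_mul, Finset.sum_add_distrib]
lemma gc_smul_left (μ : ℂ) (x z : Fin n → ℂ) : gc (μ • x) z = μ * gc x z := by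
  simp [gc, Finset.mul_sum, mul_assoc]
lemma gc_comm (x z : Fin n → ℂ) : gc x z = gc z x := by simp [gc, mul_comm]
lemma gc_sub_left (x y z : Fin n → ℂ) : gc (x - y) z = gc x z - gc y z := by
  simp [gc, sub_mul, Finset.sum_sub_distrib]
lemma gc_sub_right (x y z : Fin n → ℂ) : gc x (y - z) = gc x y - gc x z := by
  rw [gc_comm, gc_sub_left, gc_comm y x, gc_comm z x]
lemma gc_smul_right (μ : ℂ) (x z : Fin n → ℂ) : gc x (μ • z) = μ * gc x z := by
  rw [gc_comm, gc_smul_left, gc_comm z x]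

lemma conjv_add (x y : Fin n → ℂ) : conjv (x + y) = conjv x + conjv y := by
  funext i; simp [conjv]
lemma conjv_smul (μ : ℂ) (x : Fin n → ℂ) : conjv (μ • x) = (starRingEnd ℂ μ) • conjv x := by
  funext i; simp [conjv]
lemma conj_decomp (x y : Fin n → ℝ) :
    conjv (ιC x + Complex.I • ιC y) = ιC x + Complex.I • ιC (-y) := by
  funext i
  simp [conjv, ιC, map_add, map_mul, Complex.conj_I, Complex.conj_ofReal]
  try ring

lemma decompv (v : Fin n → ℂ) :
    v = ιC (fun i => (v i).re) + Complex.I • ιC (fun i => (v i).im) := by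
  funext i
  simp [ιC, Complex.ext_iff]

lemma scale_decomp (r : ℝ) (x y : Fin n → ℝ) :
    ιC (r • x) + Complex.I • ιC (r • y) = (r : ℂ) • (ιC x + Complex.I • ιC y) := by
  funext i; simp [ιC]; ring

lemma reim_zero {x y : ℝ} (h : (x:ℂ) + Complex.I * (y:ℂ) = 0) : x = 0 ∧ y = 0 := by
  simpa [Complex.ext_iff] using h

lemma RcE (R : MultilinearMap ℝ (fun _ : Fin 4 => (Fin n → ℝ)) ℝ)
    (Rc : MultilinearMap ℂ (fun _ : Fin 4 => (Fin n → ℂ)) ℂ)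
    (hext : ∀ X Y Z W : Fin n → ℝ,
      Rc ![ιC X, ιC Y, ιC Z, ιC W] = (R ![X, Y, Z, W] : ℂ))
    (a b c d e f g h : Fin n → ℝ) :
    Rc ![ιC a + Complex.I • ιC b, ιC c + Complex.I • ιC d,
         ιC e + Complex.I • ιC f, ιC g + Complex.I • ιC h]
    = (R ![a,c,e,g] : ℂ) + Complex.I * R ![a,c,e,h] + Complex.I * R ![a,c,f,g] - R ![a,c,f,h]
      + Complex.I * R ![a,d,e,g] - R ![a,d,e,h] - R ![a,d,f,g] - Complex.I * R ![a,d,f,h]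
      + Complex.I * R ![b,c,e,g] - R ![b,c,e,h] - R ![b,c,f,g] - Complex.I * R ![b,c,f,h]
      - R ![b,d,e,g] - Complex.I * R ![b,d,e,h] - Complex.I * R ![b,d,f,g] + R ![b,d,f,h] := by
  simp only [madd0, madd1, madd2, madd3, msmul0, msmul1, msmul2, msmul3, hext]
  ring_nf
  simp only [Complex.I_sq, show (Complex.I)^3 = -Complex.I by rw [pow_succ, Complex.I_sq]; ring,
    show (Complex.I)^4 = 1 by rw [show (4:ℕ)=2+2 from rfl, pow_add, Complex.I_sq]; ring]
  ring

section sym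
variable (R : MultilinearMap ℝ (fun _ : Fin 4 => (Fin n → ℝ)) ℝ)
    (Rc : MultilinearMap ℂ (fun _ : Fin 4 => (Fin n → ℂ)) ℂ)
    (hext : ∀ X Y Z W : Fin n → ℝ,
      Rc ![ιC X, ιC Y, ιC Z, ιC W] = (R ![X, Y, Z, W] : ℂ))
    (hanti : ∀ X Y Z W, R ![X, Y, Z, W] = - R ![Y, X, Z, W])
    (hpair : ∀ X Y Z W, R ![X, Y, Z, W] = R ![Z, W, X, Y])
    (hbianchi : ∀ X Y Z W,
      R ![X, Y, Z, W] + R ![Y, Z, X, W] + R ![Z, X, Y, W] = 0)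

include hext hanti in
lemma Alt12 (a b e f g h : Fin n → ℝ) :
    Rc ![ιC a + Complex.I • ιC b, ιC a + Complex.I • ιC b,
         ιC e + Complex.I • ιC f, ιC g + Complex.I • ιC h] = 0 := by
  have hC : ∀ X Y Z W, (R ![X,Y,Z,W] : ℂ) = - (R ![Y,X,Z,W] : ℂ) := by
    intro X Y Z W; exact_mod_cast congrArg (Complex.ofReal) (hanti X Y Z W)
  rw [RcE R Rc hext]
  linear_combination (1/2 : ℂ) * hC a a e g + (Complex.I/2) * hC a a e h
    + (Complex.I/2) * hC a a f g - (1/2 : ℂ) * hC a a f h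
    + Complex.I * hC a b e g - hC a b e h - hC a b f g - Complex.I * hC a b f h
    - (1/2 : ℂ) * hC b b e g - (Complex.I/2) * hC b b e h
    - (Complex.I/2) * hC b b f g + (1/2 : ℂ) * hC b b f h

include hext hanti hpair in
lemma Alt34 (a b c d e f : Fin n → ℝ) :
    Rc ![ιC a + Complex.I • ιC b, ιC c + Complex.I • ιC d,
         ιC e + Complex.I • ιC f, ιC e + Complex.I • ιC f] = 0 := by
  have hC : ∀ X Y Z W, (R ![X,Y,Z,W] : ℂ) = - (R ![X,Y,W,Z] : ℂ) := by
    intro X Y Z W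
    have : R ![X,Y,Z,W] = - R ![X,Y,W,Z] := by
      rw [hpair X Y Z W, hanti Z W X Y, hpair W Z X Y]
    exact_mod_cast congrArg (Complex.ofReal) this
  rw [RcE R Rc hext]
  linear_combination (1/2 : ℂ) * hC a c e e + Complex.I * hC a c e f - (1/2 : ℂ) * hC a c f f
    + (Complex.I/2) * hC a d e e - hC a d e f - (Complex.I/2) * hC a d f f
    + (Complex.I/2) * hC b c e e - hC b c e f - (Complex.I/2) * hC b c f f
    - (1/2 : ℂ) * hC b d e e - Complex.I * hC b d e f + (1/2 : ℂ) * hC b d f f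

include hext hanti hpair hbianchi in
lemma Kcomp (e₁ e₂ e₃ e₄ : Fin n → ℝ) :
    Rc ![ιC e₁ + Complex.I • ιC e₂, ιC e₃ + Complex.I • ιC e₄,
         ιC e₁ + Complex.I • ιC (-e₂), ιC e₃ + Complex.I • ιC (-e₄)]
    = ((R ![e₁,e₃,e₁,e₃] + R ![e₁,e₄,e₁,e₄] + R ![e₂,e₃,e₂,e₃]
          + R ![e₂,e₄,e₂,e₄] - 2 * R ![e₁,e₂,e₃,e₄] : ℝ) : ℂ) := by
  have hP : ∀ X Y Z W, (R ![X,Y,Z,W] : ℂ) = (R ![Z,W,X,Y] : ℂ) := by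
    intro X Y Z W; exact_mod_cast congrArg (Complex.ofReal) (hpair X Y Z W)
  have hA : ∀ X Y Z W, (R ![X,Y,Z,W] : ℂ) = - (R ![Y,X,Z,W] : ℂ) := by
    intro X Y Z W; exact_mod_cast congrArg (Complex.ofReal) (hanti X Y Z W)
  have hB : ∀ X Y Z W, (R ![X,Y,Z,W] : ℂ) + (R ![Y,Z,X,W] : ℂ) + (R ![Z,X,Y,W] : ℂ) = 0 := by
    intro X Y Z W; exact_mod_cast congrArg (Complex.ofReal) (hbianchi X Y Z W)
  rw [RcE R Rc hext]
  push_cast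
  simp only [mneg2 R, mneg3 R]
  push_cast
  linear_combination hP e₁ e₃ e₂ e₄ + 2 * hB e₁ e₂ e₃ e₄ - 2 * hA e₃ e₁ e₂ e₄
    + hP e₁ e₄ e₂ e₃
    + Complex.I * (hP e₁ e₄ e₁ e₃ + hP e₂ e₃ e₁ e₃ + hP e₂ e₄ e₁ e₄ + hP e₂ e₄ e₂ e₃)
end sym

set_option maxHeartbeats 2000000 in
theorem nic_iff_isotropic_nonneg {n : ℕ} (hn : 4 ≤ n)
    (R : MultilinearMap ℝ (fun _ : Fin 4 => (Fin n → ℝ)) ℝ)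
    (hanti : ∀ X Y Z W, R ![X, Y, Z, W] = - R ![Y, X, Z, W])
    (hpair : ∀ X Y Z W, R ![X, Y, Z, W] = R ![Z, W, X, Y])
    (hbianchi : ∀ X Y Z W,
      R ![X, Y, Z, W] + R ![Y, Z, X, W] + R ![Z, X, Y, W] = 0)
    -- the complex multilinear extension of R
    (Rc : MultilinearMap ℂ (fun _ : Fin 4 => (Fin n → ℂ)) ℂ)
    (hext : ∀ X Y Z W : Fin n → ℝ,
      Rc ![ιC X, ιC Y, ιC Z, ιC W] = (R ![X, Y, Z, W] : ℂ)) :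
    (∀ e₁ e₂ e₃ e₄ : Fin n → ℝ, ON4 e₁ e₂ e₃ e₄ →
      0 ≤ R ![e₁, e₃, e₁, e₃] + R ![e₁, e₄, e₁, e₄] + R ![e₂, e₃, e₂, e₃]
          + R ![e₂, e₄, e₂, e₄] - 2 * R ![e₁, e₂, e₃, e₄]) ↔
    (∀ ζ η : Fin n → ℂ, gc ζ ζ = 0 → gc ζ η = 0 → gc η η = 0 →
      0 ≤ Rc ![ζ, η, conjv ζ, conjv η]) := by
  constructor
  · -- hard direction
    intro h ζ η hζζ hζη hηη
    obtain ⟨a, b, hζd⟩ : ∃ a b, ζ = ιC a + Complex.I • ιC b := ⟨_, _, decompv ζ⟩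
    -- isotropy relations for ζ
    have hzrel : dotp a a - dotp b b = 0 ∧ dotp a b + dotp b a = 0 := by
      apply reim_zero
      rw [hζd, gc_decomp] at hζζ
      exact_mod_cast hζζ
    have hbb : dotp b b = dotp a a := by linarith [hzrel.1]
    have hab : dotp a b = 0 := by
      have := hzrel.2; rw [dotp_comm b a] at this; linarith
    by_cases ht : dotp a a = 0
    · -- ζ = 0
      have ha0 : a = 0 := dotp_self_eq_zero ht
      have hb0 : b = 0 := dotp_self_eq_zero (by rw [hbb, ht])
      have hz : ζ = 0 := by
        rw [hζd, ha0, hb0]; funext i; simp [ιC]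
      have hzero : Rc ![ζ, η, conjv ζ, conjv η] = 0 :=
        Rc.map_coord_zero 0 (by simp [hz])
      exact le_of_eq hzero.symm
    · have hta : 0 < dotp a a := lt_of_le_of_ne (dotp_self_nonneg a) (Ne.symm ht)
      have h2t : ((2 * dotp a a : ℝ) : ℂ) ≠ 0 := by
        exact_mod_cast (by positivity : (2 * dotp a a : ℝ) ≠ 0)
      set ζc : Fin n → ℂ := ιC a + Complex.I • ιC (-b) with hζc
      have hconjζ : conjv ζ = ζc := by rw [hζd, conj_decomp]
      set μ : ℂ := gc η ζc / ((2 * dotp a a : ℝ) : ℂ) with hμ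
      obtain ⟨c', d', hη'd⟩ : ∃ c d, η - μ • ζ = ιC c + Complex.I • ιC d :=
        ⟨_, _, decompv _⟩
      have hζζc : gc ζ ζc = ((2 * dotp a a : ℝ) : ℂ) := by
        rw [hζd, hζc, gc_decomp, dotp_neg_right, dotp_neg_right, hbb, hab,
          dotp_comm b a, hab]
        push_cast; ring
      -- gc relations for η' := η - μ • ζ
      have hA : gc (η - μ • ζ) ζ = 0 := by
        rw [gc_sub_left, gc_smul_left, gc_comm η ζ, hζη, hζζ]; ring
      have hB : gc (η - μ • ζ) (η - μ • ζ) = 0 := by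
        rw [gc_sub_left, gc_sub_right, gc_sub_right, gc_smul_left, gc_smul_right,
          gc_smul_right, gc_smul_left, gc_comm η ζ, hζη, hζζ, hηη]; ring
      have hC : gc (η - μ • ζ) ζc = 0 := by
        rw [gc_sub_left, gc_smul_left, hζζc, hμ, div_mul_cancel₀ _ h2t, sub_self]
      rw [hη'd, hζd, gc_decomp] at hA
      rw [hη'd, gc_decomp] at hB
      rw [hη'd, hζc, gc_decomp, dotp_neg_right, dotp_neg_right] at hC
      obtain ⟨hA1, hA2⟩ := reim_zero hA
      obtain ⟨hB1, hB2⟩ := reim_zero hB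
      obtain ⟨hC1, hC2⟩ := reim_zero hC
      have hca : dotp c' a = 0 := by linarith
      have hdb : dotp d' b = 0 := by linarith
      have hcb : dotp c' b = 0 := by linarith
      have hda : dotp d' a = 0 := by linarith
      have hdd : dotp d' d' = dotp c' c' := by linarith
      have hcd : dotp c' d' = 0 := by
        have := hB2; rw [dotp_comm d' c'] at this; linarith
      -- rewrite η in terms of η' and μ ζ
      have hηd : η = (ιC c' + Complex.I • ιC d') + μ • ζ := by
        rw [← hη'd]; ring_nf
      have hconjη : conjv η = (ιC c' + Complex.I • ιC (-d'))
          + (starRingEnd ℂ μ) • ζc := by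
        rw [hηd, conjv_add, conjv_smul, conj_decomp, hconjζ]
      by_cases ht' : dotp c' c' = 0
      · -- η is a multiple of ζ
        have hc0 : c' = 0 := dotp_self_eq_zero ht'
        have hd0 : d' = 0 := dotp_self_eq_zero (by rw [hdd, ht'])
        have hz : (ιC c' + Complex.I • ιC d' : Fin n → ℂ) = 0 := by
          rw [hc0, hd0]; funext i; simp [ιC]
        have hz2 : (ιC c' + Complex.I • ιC (-d') : Fin n → ℂ) = 0 := by
          rw [hc0, hd0]; funext i; simp [ιC]
        rw [hconjη, hηd, hz, hz2, zero_add, zero_add, hconjζ, hζc, hζd, msmul1, msmul3,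
          Alt12 R Rc hext hanti a b a (-b) a (-b)]
        simp
      · have htc : 0 < dotp c' c' := lt_of_le_of_ne (dotp_self_nonneg c') (Ne.symm ht')
        set r : ℝ := Real.sqrt (dotp a a) with hrdef
        set s : ℝ := Real.sqrt (dotp c' c') with hsdef
        have hr2 : r * r = dotp a a := Real.mul_self_sqrt hta.le
        have hs2 : s * s = dotp c' c' := Real.mul_self_sqrt htc.le
        have hr0 : r ≠ 0 := by positivity
        have hs0 : s ≠ 0 := by positivity
        have hrpos : 0 < r := Real.sqrt_pos.mpr hta
        have hspos : 0 < s := Real.sqrt_pos.mpr htc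
        obtain ⟨e₁, he₁⟩ : ∃ e, e = r⁻¹ • a := ⟨_, rfl⟩
        obtain ⟨e₂, he₂⟩ : ∃ e, e = r⁻¹ • b := ⟨_, rfl⟩
        obtain ⟨e₃, he₃⟩ : ∃ e, e = s⁻¹ • c' := ⟨_, rfl⟩
        obtain ⟨e₄, he₄⟩ : ∃ e, e = s⁻¹ • d' := ⟨_, rfl⟩
        have hae : a = r • e₁ := by rw [he₁]; exact (smul_inv_smul₀ hr0 a).symm
        have hbe : b = r • e₂ := by rw [he₂]; exact (smul_inv_smul₀ hr0 b).symm
        have hce : c' = s • e₃ := by rw [he₃]; exact (smul_inv_smul₀ hs0 c').symm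
        have hde : d' = s • e₄ := by rw [he₄]; exact (smul_inv_smul₀ hs0 d').symm
        have hac' : dotp a c' = 0 := by rw [dotp_comm]; exact hca
        have had' : dotp a d' = 0 := by rw [dotp_comm]; exact hda
        have hbc' : dotp b c' = 0 := by rw [dotp_comm]; exact hcb
        have hbd' : dotp b d' = 0 := by rw [dotp_comm]; exact hdb
        have hON : ON4 e₁ e₂ e₃ e₄ := by
          refine ⟨?_, ?_, ?_, ?_, ?_, ?_, ?_, ?_, ?_, ?_⟩ <;>
            simp only [he₁, he₂, he₃, he₄, dotp_smul_left, dotp_smul_right, hbb, hdd,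
              hab, hac', had', hbc', hbd', hcd, mul_zero] <;>
            field_simp <;> nlinarith [hr2, hs2]
        have hexpr := h e₁ e₂ e₃ e₄ hON
        rw [hconjη, hηd, hconjζ, hζc, hζd]
        rw [mstep Rc _ _ _ _ _ _
          (Alt34 R Rc hext hanti hpair a b c' d' a (-b))
          (Alt12 R Rc hext hanti a b a (-b) c' (-d'))
          (Alt12 R Rc hext hanti a b a (-b) a (-b))]
        have hval : Rc ![ιC a + Complex.I • ιC b, ιC c' + Complex.I • ιC d',
            ιC a + Complex.I • ιC (-b), ιC c' + Complex.I • ιC (-d')]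
            = ((r * s * r * s * (R ![e₁,e₃,e₁,e₃] + R ![e₁,e₄,e₁,e₄] + R ![e₂,e₃,e₂,e₃]
              + R ![e₂,e₄,e₂,e₄] - 2 * R ![e₁,e₂,e₃,e₄]) : ℝ) : ℂ) := by
          rw [hae, hbe, hce, hde, show -(r • e₂) = r • (-e₂) from (smul_neg r e₂).symm,
            show -(s • e₄) = s • (-e₄) from (smul_neg s e₄).symm,
            scale_decomp, scale_decomp, scale_decomp, scale_decomp,
            msmul0 Rc, msmul1 Rc, msmul2 Rc, msmul3 Rc,
            Kcomp R Rc hext hanti hpair hbianchi e₁ e₂ e₃ e₄]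
          push_cast; ring
        rw [hval]
        have hnn : (0:ℝ) ≤ r * s * r * s * (R ![e₁,e₃,e₁,e₃] + R ![e₁,e₄,e₁,e₄]
            + R ![e₂,e₃,e₂,e₃] + R ![e₂,e₄,e₂,e₄] - 2 * R ![e₁,e₂,e₃,e₄]) := by
          have : (0:ℝ) ≤ r * s * r * s := by positivity
          exact mul_nonneg this hexpr
        exact Complex.zero_le_real.mpr hnn
  · -- easy direction
    intro h e₁ e₂ e₃ e₄ hON
    obtain ⟨o1, o2, o3, o4, o5, o6, o7, o8, o9, o10⟩ := hON
    set ζ : Fin n → ℂ := ιC e₁ + Complex.I • ιC e₂ with hζ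
    set η : Fin n → ℂ := ιC e₃ + Complex.I • ιC e₄ with hη
    have h1 : gc ζ ζ = 0 := by
      rw [hζ, gc_decomp, o1, o2, o5, dotp_comm e₂ e₁, o5]; push_cast; ring
    have h2 : gc ζ η = 0 := by
      rw [hζ, hη, gc_decomp, o6, o7, o8, o9]; push_cast; ring
    have h3 : gc η η = 0 := by
      rw [hη, gc_decomp, o3, o4, o10, dotp_comm e₄ e₃, o10]; push_cast; ring
    have hval := h ζ η h1 h2 h3
    rw [hζ, hη, conj_decomp, conj_decomp,
      Kcomp R Rc hext hanti hpair hbianchi e₁ e₂ e₃ e₄] at hval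
    exact_mod_cast hval
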